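/- If a partition regular function ρ satisfies P⁻ and has small accretions, then ρ satisfies property (S₂). -/

import Mathlib

open Set Filter

/-- An ideal on a set `X`: contains `∅` and all finite sets, does not contain `X`,
and is closed under subsets and finite unions. -/
def IsIdeal {X : Type*} (I : Set (Set X)) : Prop :=
  ∅ ∈ I ∧ (Set.univ : Set X) ∉ I ∧ (∀ A : Set X, A.Finite → A ∈ I) ∧
    (∀ A B : Set X, A ⊆ B → B ∈ I → A ∈ I) ∧
    (∀ A B : Set X, A ∈ I → B ∈ I → A ∪ B ∈ I)

/-- A partition regular function `ρ : 𝓕 → [Λ]^ω` (modelled as a total function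
`ρ : Set Ω → Set Λ` whose relevant values are those on `𝓕`). `𝓕` is a nonempty family
of infinite subsets of `Ω` closed under removing finite sets; `ρ` takes infinite values on `𝓕`,
is monotone (M), Ramsey partition regular (R) and sparse (S). -/
structure IsPartReg {Ω Λ : Type*} (𝓕 : Set (Set Ω)) (ρ : Set Ω → Set Λ) : Prop where
  nonempty : 𝓕.Nonempty
  infinite : ∀ F ∈ 𝓕, F.Infinite
  diff_mem : ∀ F ∈ 𝓕, ∀ K : Set Ω, K.Finite → F \ K ∈ 𝓕
  rho_infinite : ∀ F ∈ 𝓕, (ρ F).Infinite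
  mono : ∀ E ∈ 𝓕, ∀ F ∈ 𝓕, E ⊆ F → ρ E ⊆ ρ F
  ramsey : ∀ F ∈ 𝓕, ∀ A B : Set Λ, ρ F = A ∪ B → ∃ E ∈ 𝓕, ρ E ⊆ A ∨ ρ E ⊆ B
  sparse : ∀ E ∈ 𝓕, ∃ F ∈ 𝓕, F ⊆ E ∧ ∀ a ∈ ρ F, ∃ K : Set Ω, K.Finite ∧ a ∉ ρ (F \ K)

/-- The ideal `I_ρ = {A ⊆ Λ : ∀ F ∈ 𝓕, ρ(F) ⊄ A}` associated to `ρ`. -/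
def idealOf {Ω Λ : Type*} (𝓕 : Set (Set Ω)) (ρ : Set Ω → Set Λ) : Set (Set Λ) :=
  {A | ∀ F ∈ 𝓕, ¬ ρ F ⊆ A}

/-- Property `(S₂)` of a partition regular function. -/
def S2Prop {Ω Λ : Type*} (𝓕 : Set (Set Ω)) (ρ : Set Ω → Set Λ) : Prop :=
  ∀ E ∈ 𝓕, ∃ F ∈ 𝓕, F ⊆ E ∧ ∀ B : Set Λ, B ∉ idealOf 𝓕 ρ → B ⊆ ρ F →
    ∃ G ∈ 𝓕, ρ G ⊆ B ∧
      ∀ K : Set Ω, K.Finite → ∃ L : Set Ω, L.Finite ∧ ρ (G \ L) ⊆ ρ (F \ K)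

/-- Property `(S₁)` of a partition regular function. -/
def S1Prop {Ω Λ : Type*} (𝓕 : Set (Set Ω)) (ρ : Set Ω → Set Λ) : Prop :=
  ∀ E ∈ 𝓕, ∃ F ∈ 𝓕, F ⊆ E ∧ ∀ A ∈ idealOf 𝓕 ρ,
    ∃ G ∈ 𝓕, ρ G ⊆ ρ F \ A ∧
      ∀ K : Set Ω, K.Finite → ∃ L : Set Ω, L.Finite ∧ ρ (G \ L) ⊆ ρ (F \ K)

/-- Property `P⁻` of a partition regular function. -/
def PminusProp {Ω Λ : Type*} (𝓕 : Set (Set Ω)) (ρ : Set Ω → Set Λ) : Prop :=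
  ∀ A : ℕ → Set Λ, (∀ n, A (n + 1) ⊆ A n) → A 0 ∉ idealOf 𝓕 ρ →
    (∀ n, A n \ A (n + 1) ∈ idealOf 𝓕 ρ) →
    ∃ F ∈ 𝓕, ρ F ⊆ A 0 ∧ ∀ n, ∃ K : Set Ω, K.Finite ∧ ρ (F \ K) ⊆ A n

/-- `ρ` has small accretions. -/
def HasSmallAccretions {Ω Λ : Type*} (𝓕 : Set (Set Ω)) (ρ : Set Ω → Set Λ) : Prop :=
  ∀ E ∈ 𝓕, ∃ F ∈ 𝓕, F ⊆ E ∧ ∀ K : Set Ω, K.Finite → ρ F \ ρ (F \ K) ∈ idealOf 𝓕 ρ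

/-- if a partition regular function (on a countably infinite `Ω`) satisfies
`P⁻` and has small accretions, then it satisfies `(S₂)`. -/
theorem stmt_7 {Ω Λ : Type*} [Countable Ω] [Infinite Ω] (𝓕 : Set (Set Ω)) (ρ : Set Ω → Set Λ)
    (h : IsPartReg 𝓕 ρ) (hp : PminusProp 𝓕 ρ) (hs : HasSmallAccretions 𝓕 ρ) :
    S2Prop 𝓕 ρ := by
  intro E hE
  obtain ⟨F, hF, hFE, hFsmall⟩ := hs E hE
  refine ⟨F, hF, hFE, ?_⟩
  intro B hB hBF
  obtain ⟨e⟩ : Nonempty (ℕ ≃ Ω) := by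
    obtain ⟨e'⟩ := nonempty_equiv_of_countable (α := Ω) (β := ℕ)
    exact ⟨e'.symm⟩
  set K : ℕ → Set Ω := fun n => e '' Set.Iio n with hKdef
  have hKfin : ∀ n, (K n).Finite := fun n => (Set.finite_Iio n).image e
  have hdiffmem : ∀ n, F \ K n ∈ 𝓕 := fun n => h.diff_mem F hF _ (hKfin n)
  set A : ℕ → Set Λ := fun n => B ∩ ρ (F \ K n) with hAdef
  have hmonoK : ∀ n, K n ⊆ K (n + 1) :=
    fun n => Set.image_mono (Set.Iio_subset_Iio (Nat.le_succ n))
  have hAmono : ∀ n, A (n + 1) ⊆ A n := by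
    intro n
    apply Set.inter_subset_inter_right
    exact h.mono _ (hdiffmem (n + 1)) _ (hdiffmem n)
      (Set.diff_subset_diff_right (hmonoK n))
  have hK0 : K 0 = ∅ := by
    ext ω; simp [hKdef, Nat.not_lt_zero]
  have hA0 : A 0 = B := by
    rw [hAdef]
    simp only [hK0, Set.diff_empty]
    exact Set.inter_eq_left.mpr hBF
  have hIsub : ∀ X Y : Set Λ, X ⊆ Y → Y ∈ idealOf 𝓕 ρ → X ∈ idealOf 𝓕 ρ :=
    fun X Y hXY hY F' hF' hsub => hY F' hF' (hsub.trans hXY)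
  have hIdiff : ∀ n, A n \ A (n + 1) ∈ idealOf 𝓕 ρ := by
    intro n
    apply hIsub _ (ρ F \ ρ (F \ K (n + 1))) ?_ (hFsmall _ (hKfin (n + 1)))
    rintro x ⟨⟨hxB, hxρ⟩, hxnot⟩
    refine ⟨h.mono _ (hdiffmem n) _ hF Set.diff_subset hxρ, ?_⟩
    intro hx
    exact hxnot ⟨hxB, hx⟩
  obtain ⟨G, hG, hGA0, hGn⟩ := hp A hAmono (hA0 ▸ hB) hIdiff
  refine ⟨G, hG, hGA0.trans (hA0 ▸ Set.Subset.rfl), ?_⟩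
  intro Kf hKf
  -- find n with Kf ⊆ K n
  have : ∃ n, Kf ⊆ K n := by
    have hfin : (e.symm '' Kf).Finite := hKf.image _
    obtain ⟨N, hN⟩ := hfin.bddAbove
    refine ⟨N + 1, fun ω hω => ?_⟩
    refine ⟨e.symm ω, ?_, e.apply_symm_apply ω⟩
    exact Nat.lt_succ_of_le (hN ⟨ω, hω, rfl⟩)
  obtain ⟨n, hn⟩ := this
  obtain ⟨L, hLfin, hL⟩ := hGn n
  refine ⟨L, hLfin, ?_⟩
  intro x hx
  have hxA : x ∈ A n := hL hx
  exact h.mono _ (hdiffmem n) _ (h.diff_mem F hF Kf hKf)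
    (Set.diff_subset_diff_right hn) hxA.2
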